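/- For all positive integers d₁,…,d_g, the Euler totient φ(d₁·d₂⋯d_g) divides ρ*(d₁,…,d_g). -/

import Mathlib

open Finset

/-- The binary quadratic form `q_i(x,y) = a_i x^2 + 2 b_i x y + c_i y^2`. -/
def qf {g : ℕ} (a b c : Fin g → ℤ) (i : Fin g) (x : ℤ × ℤ) : ℤ :=
  a i * x.1 ^ 2 + 2 * b i * x.1 * x.2 + c i * x.2 ^ 2

/-- The resolvent of two binary quadratic forms. -/
def res₂ (a₁ b₁ c₁ a₂ b₂ c₂ : ℤ) : ℤ :=
  (a₁ * c₂ - a₂ * c₁) ^ 2 - 4 * (b₁ * c₂ - b₂ * c₁) * (a₁ * b₂ - a₂ * b₁)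

/-- The quantity `D`. -/
def Dconst (g : ℕ) (a b c : Fin g → ℤ) : ℤ :=
  (∏ p ∈ (Finset.range (2 * g + 1)).filter Nat.Prime, (p : ℤ)) *
    (∏ k, a k * c k * (b k ^ 2 - a k * c k)) *
    ∏ i, ∏ j ∈ Finset.Ioi i, res₂ (a i) (b i) (c i) (a j) (b j) (c j)

/-- `ρ(d₁,…,d_g)`. -/
def rho (g : ℕ) (a b c : Fin g → ℤ) (d : Fin g → ℕ) : ℕ :=
  (((Finset.range (∏ i, d i)) ×ˢ (Finset.range (∏ i, d i))).filter
    (fun x => ∀ i, (d i : ℤ) ∣ qf a b c i ((x.1 : ℤ), (x.2 : ℤ)))).card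

/-- `ρ*(d₁,…,d_g)`. -/
def rhostar (g : ℕ) (a b c : Fin g → ℤ) (d : Fin g → ℕ) : ℕ :=
  (((Finset.range (∏ i, d i)) ×ˢ (Finset.range (∏ i, d i))).filter
    (fun x => (∀ i, (d i : ℤ) ∣ qf a b c i ((x.1 : ℤ), (x.2 : ℤ))) ∧
      Nat.gcd (Nat.gcd x.1 x.2) (∏ i, d i) = 1)).card

/-- `ψ(d₁,…,d_g) = ∏_p p^{⌈max_i v_p(d_i)/2⌉}`. -/
def psi (g : ℕ) (d : Fin g → ℕ) : ℕ :=
  ∏ p ∈ (∏ i, d i).primeFactors,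
    p ^ (((Finset.univ.sup fun i => (d i).factorization p) + 1) / 2)

/-- Counting lemma: if a finite group acts with trivial stabilizers on a finite
type, its cardinality divides that of the type. -/
lemma free_card_dvd {G α : Type*} [Group G] [Finite G] [Finite α] [MulAction G α]
    (h : ∀ x : α, MulAction.stabilizer G x = ⊥) : Nat.card G ∣ Nat.card α := by
  classical
  let e : α ≃ (Quotient (MulAction.orbitRel G α)) × G :=
    (MulAction.selfEquivSigmaOrbitsQuotientStabilizer G α).trans
      (Equiv.sigmaEquivProdOfEquiv fun ω => by
        rw [h]; exact QuotientGroup.quotientBot.toEquiv)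
  rw [Nat.card_congr e, Nat.card_prod]
  exact dvd_mul_left _ _

/-- Bezout characterization of the gcd condition in `ZMod D`. -/
lemma bezout_iff {D : ℕ} [NeZero D] (x y : ZMod D) :
    Nat.gcd (Nat.gcd x.val y.val) D = 1 ↔ ∃ α β : ZMod D, α * x + β * y = 1 := by
  have hx : ((x.val : ℕ) : ZMod D) = x := by rw [ZMod.natCast_val, ZMod.cast_id]
  have hy : ((y.val : ℕ) : ZMod D) = y := by rw [ZMod.natCast_val, ZMod.cast_id]
  constructor
  · intro h
    have h1 : IsCoprime (Nat.gcd x.val y.val : ℤ) (D : ℤ) := by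
      rw [Int.isCoprime_iff_gcd_eq_one]
      simpa using h
    obtain ⟨s, t, hst⟩ := h1
    have hg : (Nat.gcd x.val y.val : ℤ) =
        x.val * Int.gcdA x.val y.val + y.val * Int.gcdB x.val y.val :=
      Int.gcd_eq_gcd_ab x.val y.val
    refine ⟨(s : ZMod D) * ((Int.gcdA x.val y.val : ℤ) : ZMod D),
      (s : ZMod D) * ((Int.gcdB x.val y.val : ℤ) : ZMod D), ?_⟩
    have hc : ((s * (Nat.gcd x.val y.val : ℤ) + t * (D : ℤ) : ℤ) : ZMod D) = 1 := by
      rw [hst]; norm_cast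
    rw [hg] at hc
    push_cast at hc
    rw [hx, hy] at hc
    simp only [ZMod.natCast_self, mul_zero, add_zero] at hc
    linear_combination hc
  · rintro ⟨α, β, hab⟩
    have h1 : ((α.val * x.val + β.val * y.val : ℕ) : ZMod D) = ((1 : ℕ) : ZMod D) := by
      push_cast [ZMod.natCast_val, ZMod.cast_id]
      simpa [hx, hy] using hab
    rw [ZMod.natCast_eq_natCast_iff] at h1
    set m := Nat.gcd (Nat.gcd x.val y.val) D with hm
    have hmD : m ∣ D := Nat.gcd_dvd_right _ _
    have hmx : m ∣ x.val := (Nat.gcd_dvd_left _ _).trans (Nat.gcd_dvd_left _ _)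
    have hmy : m ∣ y.val := (Nat.gcd_dvd_left _ _).trans (Nat.gcd_dvd_right _ _)
    have hlhs : m ∣ α.val * x.val + β.val * y.val :=
      Nat.dvd_add (Dvd.dvd.mul_left hmx _) (Dvd.dvd.mul_left hmy _)
    have h2 : (α.val * x.val + β.val * y.val) ≡ 1 [MOD m] := h1.of_dvd hmD
    have h3 : (0 : ℕ) ≡ 1 [MOD m] :=
      ((Nat.modEq_zero_iff_dvd.mpr hlhs).symm.trans h2)
    have : m ∣ 1 := by
      have := h3.symm
      rwa [Nat.modEq_zero_iff_dvd] at this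
    exact Nat.dvd_one.mp this

/-- The condition defining `ρ*`, transported to `ZMod D × ZMod D`. -/
def Pcond {g : ℕ} (a b c : Fin g → ℤ) (d : Fin g → ℕ) (D : ℕ) [NeZero D]
    (x : ZMod D × ZMod D) : Prop :=
  (∀ i, (d i : ℤ) ∣ qf a b c i ((x.1.val : ℤ), (x.2.val : ℤ))) ∧
    Nat.gcd (Nat.gcd x.1.val x.2.val) D = 1

/-- Casting the value of `qf` to `ZMod m` for `m ∣ D`. -/
lemma qf_zmod {g : ℕ} (a b c : Fin g → ℤ) (i : Fin g) {D m : ℕ} [NeZero D] (hm : m ∣ D)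
    (x : ZMod D × ZMod D) :
    ((qf a b c i ((x.1.val : ℤ), (x.2.val : ℤ)) : ℤ) : ZMod m) =
      (a i : ZMod m) * (ZMod.castHom hm (ZMod m) x.1) ^ 2
        + 2 * (b i : ZMod m) * (ZMod.castHom hm (ZMod m) x.1) * (ZMod.castHom hm (ZMod m) x.2)
        + (c i : ZMod m) * (ZMod.castHom hm (ZMod m) x.2) ^ 2 := by
  simp only [qf, ZMod.castHom_apply]
  push_cast
  rw [ZMod.natCast_val, ZMod.natCast_val]

/-- The condition `Pcond` is preserved by multiplication by a unit. -/
lemma Pcond_smul {g : ℕ} (a b c : Fin g → ℤ) (d : Fin g → ℕ) (D : ℕ) [NeZero D]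
    (hdvd : ∀ i, d i ∣ D) (u : (ZMod D)ˣ) (x : ZMod D × ZMod D)
    (h : Pcond a b c d D x) :
    Pcond a b c d D ((u : ZMod D) * x.1, (u : ZMod D) * x.2) := by
  obtain ⟨h1, h2⟩ := h
  constructor
  · intro i
    rw [← ZMod.intCast_zmod_eq_zero_iff_dvd]
    have hq : ((qf a b c i ((x.1.val : ℤ), (x.2.val : ℤ)) : ℤ) : ZMod (d i)) = 0 :=
      (ZMod.intCast_zmod_eq_zero_iff_dvd _ _).mpr (h1 i)
    rw [qf_zmod a b c i (hdvd i)] at hq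
    rw [qf_zmod a b c i (hdvd i) (((u : ZMod D) * x.1, (u : ZMod D) * x.2))]
    simp only [map_mul]
    set U := ZMod.castHom (hdvd i) (ZMod (d i)) (u : ZMod D)
    set X := ZMod.castHom (hdvd i) (ZMod (d i)) x.1
    set Y := ZMod.castHom (hdvd i) (ZMod (d i)) x.2
    calc (a i : ZMod (d i)) * (U * X) ^ 2 + 2 * (b i : ZMod (d i)) * (U * X) * (U * Y)
          + (c i : ZMod (d i)) * (U * Y) ^ 2
        = U ^ 2 * ((a i : ZMod (d i)) * X ^ 2 + 2 * (b i : ZMod (d i)) * X * Y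
            + (c i : ZMod (d i)) * Y ^ 2) := by ring
      _ = 0 := by rw [hq, mul_zero]
  · rw [bezout_iff] at h2 ⊢
    obtain ⟨α, β, hab⟩ := h2
    refine ⟨α * (u⁻¹ : (ZMod D)ˣ), β * (u⁻¹ : (ZMod D)ˣ), ?_⟩
    have hu : ((u⁻¹ : (ZMod D)ˣ) : ZMod D) * (u : ZMod D) = 1 := by
      rw [← Units.val_mul, inv_mul_cancel, Units.val_one]
    calc α * (u⁻¹ : (ZMod D)ˣ) * ((u : ZMod D) * x.1)
          + β * (u⁻¹ : (ZMod D)ˣ) * ((u : ZMod D) * x.2)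
        = (((u⁻¹ : (ZMod D)ˣ) : ZMod D) * (u : ZMod D)) * (α * x.1 + β * x.2) := by ring
      _ = 1 := by rw [hu, hab, one_mul]

/-- `φ(d₁⋯d_g)` divides `ρ*(d₁,…,d_g)`. -/
theorem stmt9 (g : ℕ) (hg : 2 ≤ g) (a b c : Fin g → ℤ)
    (d : Fin g → ℕ) (hd : ∀ i, 0 < d i) :
    Nat.totient (∏ i, d i) ∣ rhostar g a b c d := by
  classical
  have hD : 0 < ∏ i, d i := Finset.prod_pos (fun i _ => hd i)
  set D := ∏ i, d i with hDdef
  haveI : NeZero D := ⟨hD.ne'⟩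
  have hdvd : ∀ i, d i ∣ D := fun i => Finset.dvd_prod_of_mem d (Finset.mem_univ i)
  -- Step A: reformulate the count over `ZMod D × ZMod D`
  have hcount : rhostar g a b c d =
      (Finset.univ.filter (fun x : ZMod D × ZMod D => Pcond a b c d D x)).card := by
    rw [rhostar]
    refine Finset.card_nbij' (fun x => (((x.1 : ℕ) : ZMod D), ((x.2 : ℕ) : ZMod D)))
      (fun y => (y.1.val, y.2.val)) ?_ ?_ ?_ ?_
    · rintro ⟨x1, x2⟩ hx
      simp only [Finset.mem_coe, Finset.mem_filter, Finset.mem_product, Finset.mem_range] at hx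
      obtain ⟨⟨hx1, hx2⟩, hq, hgcd⟩ := hx
      simp only [Finset.mem_coe, Finset.mem_filter, Finset.mem_univ, true_and]
      simp only [Pcond]
      rw [ZMod.val_cast_of_lt hx1, ZMod.val_cast_of_lt hx2]
      exact ⟨hq, hgcd⟩
    · rintro ⟨y1, y2⟩ hy
      simp only [Finset.mem_coe, Finset.mem_filter, Finset.mem_univ, true_and] at hy
      simp only [Pcond] at hy
      simp only [Finset.mem_coe, Finset.mem_filter, Finset.mem_product, Finset.mem_range]
      exact ⟨⟨ZMod.val_lt y1, ZMod.val_lt y2⟩, hy.1, hy.2⟩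
    · rintro ⟨x1, x2⟩ hx
      simp only [Finset.mem_coe, Finset.mem_filter, Finset.mem_product, Finset.mem_range] at hx
      simp [ZMod.val_cast_of_lt hx.1.1, ZMod.val_cast_of_lt hx.1.2]
    · rintro ⟨y1, y2⟩ _
      simp [ZMod.natCast_val, ZMod.cast_id]
  -- Step B: set up the free action of the units
  let S : SubMulAction (ZMod D)ˣ (ZMod D × ZMod D) :=
    { carrier := {x | Pcond a b c d D x}
      smul_mem' := by
        intro u x hx
        exact Pcond_smul a b c d D hdvd u x hx }
  have hfree : ∀ s : S, MulAction.stabilizer (ZMod D)ˣ s = ⊥ := by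
    intro s
    rw [Subgroup.eq_bot_iff_forall]
    intro u hu
    rw [MulAction.mem_stabilizer_iff] at hu
    have hval : (u : ZMod D) * (s : ZMod D × ZMod D).1 = (s : ZMod D × ZMod D).1 ∧
        (u : ZMod D) * (s : ZMod D × ZMod D).2 = (s : ZMod D × ZMod D).2 := by
      have h := congrArg Subtype.val hu
      exact ⟨congrArg Prod.fst h, congrArg Prod.snd h⟩
    obtain ⟨hP1, hP2⟩ := s.2
    rw [bezout_iff] at hP2
    obtain ⟨α, β, hab⟩ := hP2
    have hone : (u : ZMod D) = 1 := by
      calc (u : ZMod D) = (u : ZMod D) * (α * (s : ZMod D × ZMod D).1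
            + β * (s : ZMod D × ZMod D).2) := by rw [hab, mul_one]
        _ = α * ((u : ZMod D) * (s : ZMod D × ZMod D).1)
            + β * ((u : ZMod D) * (s : ZMod D × ZMod D).2) := by ring
        _ = α * (s : ZMod D × ZMod D).1 + β * (s : ZMod D × ZMod D).2 := by
            rw [hval.1, hval.2]
        _ = 1 := hab
    exact Units.ext (by simpa using hone)
  have hdvd2 : Nat.card (ZMod D)ˣ ∣ Nat.card S := free_card_dvd hfree
  have hcard2 : Nat.card S = (Finset.univ.filter
      (fun x : ZMod D × ZMod D => Pcond a b c d D x)).card := by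
    have e : ↥S ≃ {x : ZMod D × ZMod D // Pcond a b c d D x} :=
      Equiv.subtypeEquivRight fun x => Iff.rfl
    rw [Nat.card_congr e, Nat.card_eq_fintype_card, Fintype.card_subtype]
  rw [hcard2] at hdvd2
  rw [Nat.card_eq_fintype_card, ZMod.card_units_eq_totient] at hdvd2
  rw [hcount]
  exact hdvd2
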